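/- Fix a positive integer N and define G(q) = (μ(q)/φ(q)²) · Σ_{a : 0 < a < q, gcd(a, q) = 1} e^{2πi·a·N/q}. Then the series Σ_{q=1}^∞ G(q) converges absolutely, the infinite product ∏_{p prime} (1 + G(p)) converges, and Σ_{q=1}^∞ G(q) = ∏_{p prime} (1 + G(p)). -/

import Mathlib

open Finset ArithmeticFunction

/-- `G N q = (μ(q)/φ(q)²) · Σ_{0 < a < q, gcd(a,q)=1} e^{2πi·a·N/q}`, with `G N 1 = 1`. -/
noncomputable def goldbachG (N q : ℕ) : ℂ :=
  if q = 1 then 1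
  else ((ArithmeticFunction.moebius q : ℤ) : ℂ) / ((Nat.totient q : ℂ)) ^ 2 *
    ∑ a ∈ (Finset.Ioo 0 q).filter (fun a => Nat.gcd a q = 1),
      Complex.exp ((2 * Real.pi * a * N / q : ℝ) * Complex.I)

namespace GoldbachAux

open scoped ArithmeticFunction.Moebius


/-- The arithmetic function `d ↦ d` if `d ∣ N` (and `d ≠ 0`), else `0`. -/
noncomputable def fN (N : ℕ) : ArithmeticFunction ℂ :=
  ⟨fun d => if d ∣ N ∧ d ≠ 0 then (d : ℂ) else 0, by simp⟩

lemma fN_apply (N d : ℕ) : fN N d = if d ∣ N ∧ d ≠ 0 then (d : ℂ) else 0 := rfl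

lemma fN_mult (N : ℕ) : (fN N).IsMultiplicative := by
  refine ⟨by simp [fN_apply], fun {m n} h => ?_⟩
  simp only [fN_apply]
  have hiff : (m * n ∣ N ∧ m * n ≠ 0) ↔ (m ∣ N ∧ m ≠ 0) ∧ (n ∣ N ∧ n ≠ 0) := by
    constructor
    · rintro ⟨h1, h2⟩
      exact ⟨⟨(dvd_mul_right m n).trans h1, left_ne_zero_of_mul h2⟩,
             ⟨(dvd_mul_left n m).trans h1, right_ne_zero_of_mul h2⟩⟩
    · rintro ⟨⟨h1, h2⟩, h3, h4⟩
      exact ⟨h.mul_dvd_of_dvd_of_dvd h1 h3, mul_ne_zero h2 h4⟩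
  by_cases H : (m ∣ N ∧ m ≠ 0) ∧ (n ∣ N ∧ n ≠ 0)
  · rw [if_pos (hiff.mpr H), if_pos H.1, if_pos H.2]
    push_cast
    ring
  · rw [if_neg fun hc => H (hiff.mp hc)]
    rcases not_and_or.mp H with h' | h' <;> rw [if_neg h'] <;> simp

/-- geometric sum evaluation -/
lemma geom_sum_exp (N m : ℕ) (hm : 0 < m) :
    ∑ b ∈ Finset.range m, Complex.exp ((2 * Real.pi * b * N / m : ℝ) * Complex.I)
      = if m ∣ N then (m : ℂ) else 0 := by
  have hm' : (m : ℝ) ≠ 0 := Nat.cast_ne_zero.mpr hm.ne'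
  have hmc : (m : ℂ) ≠ 0 := Nat.cast_ne_zero.mpr hm.ne'
  by_cases hdvd : m ∣ N
  · obtain ⟨k, rfl⟩ := hdvd
    rw [if_pos (dvd_mul_right m k)]
    have hterm : ∀ b : ℕ,
        Complex.exp ((2 * Real.pi * b * ((m * k : ℕ) : ℝ) / m : ℝ) * Complex.I) = 1 := by
      intro b
      have : ((2 * Real.pi * b * ((m * k : ℕ) : ℝ) / m : ℝ) : ℂ) * Complex.I
          = ((b * k : ℤ) : ℂ) * (2 * Real.pi * Complex.I) := by
        push_cast
        field_simp
      rw [this, Complex.exp_int_mul_two_pi_mul_I]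
    rw [Finset.sum_congr rfl fun b _ => hterm b]
    simp
  · rw [if_neg hdvd]
    set z : ℂ := Complex.exp ((2 * Real.pi * N / m : ℝ) * Complex.I) with hzdef
    have hz : ∀ b : ℕ,
        Complex.exp ((2 * Real.pi * b * N / m : ℝ) * Complex.I) = z ^ b := by
      intro b
      rw [hzdef, ← Complex.exp_nat_mul]
      congr 1
      push_cast
      ring
    have hπI : (2 * (Real.pi : ℂ) * Complex.I) ≠ 0 := by
      simp [Real.pi_ne_zero, Complex.I_ne_zero]
    have hz1 : z ≠ 1 := by
      intro h
      rw [hzdef, Complex.exp_eq_one_iff] at h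
      obtain ⟨n, hn⟩ := h
      apply hdvd
      have h2 : ((N : ℂ) / m) * (2 * (Real.pi : ℂ) * Complex.I)
          = (n : ℂ) * (2 * (Real.pi : ℂ) * Complex.I) := by
        push_cast at hn ⊢
        rw [← hn]
        ring
      have h3 : (N : ℂ) / m = (n : ℂ) := mul_right_cancel₀ hπI h2
      rw [div_eq_iff hmc] at h3
      have h5 : (N : ℤ) = n * m := by exact_mod_cast h3
      exact Int.natCast_dvd_natCast.mp ⟨n, by rw [h5]; ring⟩
    have hzm : z ^ m = 1 := by
      rw [← hz m]
      have : ((2 * Real.pi * m * N / m : ℝ) : ℂ) * Complex.I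
          = ((N : ℤ) : ℂ) * (2 * Real.pi * Complex.I) := by
        push_cast
        field_simp
      rw [this, Complex.exp_int_mul_two_pi_mul_I]
    simp only [hz]
    rw [geom_sum_eq hz1, hzm]
    simp

lemma ramanujan (N q : ℕ) (hq : 0 < q) :
    ∑ a ∈ (Finset.range q).filter (fun a => Nat.gcd a q = 1),
      Complex.exp ((2 * Real.pi * a * N / q : ℝ) * Complex.I)
    = ((μ : ArithmeticFunction ℂ) * fN N) q := by
  have hq0 : q ≠ 0 := hq.ne'
  set E : ℕ → ℂ := fun a => Complex.exp ((2 * Real.pi * a * N / q : ℝ) * Complex.I) with hE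
  have hmoeb : ∀ a, (if Nat.gcd a q = 1 then (1 : ℂ) else 0)
      = ∑ d ∈ q.divisors.filter (· ∣ a), ((μ d : ℤ) : ℂ) := by
    intro a
    have hfe : q.divisors.filter (· ∣ a) = (Nat.gcd a q).divisors := by
      ext d
      simp only [Nat.mem_divisors, Finset.mem_filter, Nat.dvd_gcd_iff]
      constructor
      · rintro ⟨⟨h1, _⟩, h2⟩
        exact ⟨⟨h2, h1⟩, Nat.gcd_ne_zero_right hq0⟩
      · rintro ⟨⟨h2, h1⟩, _⟩
        exact ⟨⟨h1, hq0⟩, h2⟩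
    have h1 := congrArg (fun f : ArithmeticFunction ℂ => f (Nat.gcd a q))
      (coe_moebius_mul_coe_zeta (R := ℂ))
    simp only [coe_mul_zeta_apply, one_apply, intCoe_apply] at h1
    rw [hfe, h1]
  calc ∑ a ∈ (Finset.range q).filter (fun a => Nat.gcd a q = 1), E a
      = ∑ a ∈ Finset.range q, (if Nat.gcd a q = 1 then (1:ℂ) else 0) * E a := by
        rw [Finset.sum_filter]
        exact Finset.sum_congr rfl fun a _ => by by_cases h : Nat.gcd a q = 1 <;> simp [h]
    _ = ∑ a ∈ Finset.range q, ∑ d ∈ q.divisors, (if d ∣ a then ((μ d : ℤ):ℂ) * E a else 0) := by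
        refine Finset.sum_congr rfl fun a _ => ?_
        rw [hmoeb a, Finset.sum_mul, ← Finset.sum_filter]
    _ = ∑ d ∈ q.divisors, ∑ a ∈ Finset.range q, (if d ∣ a then ((μ d : ℤ):ℂ) * E a else 0) :=
        Finset.sum_comm
    _ = ∑ d ∈ q.divisors, ((μ d : ℤ):ℂ) * ∑ a ∈ (Finset.range q).filter (fun a => d ∣ a), E a := by
        refine Finset.sum_congr rfl fun d _ => ?_
        rw [Finset.sum_filter, Finset.mul_sum]
        exact Finset.sum_congr rfl fun a _ => by by_cases h : d ∣ a <;> simp [h]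
    _ = ∑ d ∈ q.divisors, ((μ d : ℤ):ℂ) * fN N (q / d) := by
        refine Finset.sum_congr rfl fun d hd => ?_
        obtain ⟨⟨m, hm⟩, -⟩ := Nat.mem_divisors.mp hd
        subst hm
        have hd0 : d ≠ 0 := by rintro rfl; exact hq0 (by simpa using rfl)
        have hm0 : m ≠ 0 := by rintro rfl; exact hq0 (by simp)
        have hdpos : 0 < d := Nat.pos_of_ne_zero hd0
        have hmpos : 0 < m := Nat.pos_of_ne_zero hm0
        have hqd : d * m / d = m := Nat.mul_div_cancel_left m hdpos
        congr 1
        have hbij : ∑ a ∈ (Finset.range (d * m)).filter (fun a => d ∣ a), E a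
            = ∑ b ∈ Finset.range m, Complex.exp ((2 * Real.pi * b * N / m : ℝ) * Complex.I) := by
          refine Finset.sum_nbij' (fun a => a / d) (fun b => d * b) ?_ ?_ ?_ ?_ ?_
          · intro a ha
            obtain ⟨ha1, ha2⟩ := Finset.mem_filter.mp ha
            rw [Finset.mem_range] at ha1
            simp only [Finset.mem_range]
            obtain ⟨c, rfl⟩ := ha2
            rw [Nat.mul_div_cancel_left c hdpos]
            exact lt_of_mul_lt_mul_left ha1 (Nat.zero_le d)
          · intro b hb
            rw [Finset.mem_range] at hb
            refine Finset.mem_filter.mpr ⟨Finset.mem_range.mpr ?_, dvd_mul_right d b⟩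
            exact (Nat.mul_lt_mul_left hdpos).mpr hb
          · intro a ha
            exact Nat.mul_div_cancel' (Finset.mem_filter.mp ha).2
          · intro b hb
            exact Nat.mul_div_cancel_left b hdpos
          · intro a ha
            obtain ⟨ha1, ⟨c, rfl⟩⟩ := Finset.mem_filter.mp ha
            simp only [hE]
            rw [Nat.mul_div_cancel_left c hdpos]
            congr 1
            have hdr : (d : ℂ) ≠ 0 := Nat.cast_ne_zero.mpr hd0
            have hmr : (m : ℂ) ≠ 0 := Nat.cast_ne_zero.mpr hm0
            push_cast
            field_simp
        rw [hbij, geom_sum_exp N m hmpos, hqd, fN_apply]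
        by_cases hmN : m ∣ N
        · rw [if_pos hmN, if_pos ⟨hmN, hm0⟩]
        · rw [if_neg hmN, if_neg (fun hc => hmN hc.1)]
    _ = ((μ : ArithmeticFunction ℂ) * fN N) q := by
        rw [mul_apply, ← Nat.sum_divisorsAntidiagonal (fun d e => ((μ d : ℤ):ℂ) * fN N e)]
        exact Finset.sum_congr rfl fun x _ => by rw [intCoe_apply]



lemma odd_prime_pow_bound {p : ℕ} (hp : p.Prime) (hp2 : p ≠ 2) : p ^ 6 ≤ (p - 1) ^ 10 := by
  have h3 : 3 ≤ p := by
    have := hp.two_le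
    omega
  obtain ⟨x, rfl⟩ : ∃ x, p = x + 1 := ⟨p - 1, by omega⟩
  simp only [Nat.add_sub_cancel]
  have hx : 2 ≤ x := by omega
  rcases eq_or_lt_of_le hx with rfl | hx3
  · norm_num
  · have hx' : 3 ≤ x := hx3
    calc (x + 1) ^ 6 ≤ (2 * x) ^ 6 := Nat.pow_le_pow_left (by omega) 6
      _ = 64 * x ^ 6 := by ring
      _ ≤ x ^ 4 * x ^ 6 := by
          refine Nat.mul_le_mul_right _ ?_
          calc 64 ≤ 3 ^ 4 := by norm_num
            _ ≤ x ^ 4 := Nat.pow_le_pow_left hx' 4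
      _ = x ^ 10 := by ring

lemma odd_squarefree_bound : ∀ m : ℕ, Squarefree m → Odd m → m ^ 6 ≤ m.totient ^ 10 := by
  intro m
  induction m using Nat.strong_induction_on with
  | _ m ih =>
    intro hsq hodd
    rcases eq_or_ne m 1 with rfl | hm1
    · simp
    have hm0 : m ≠ 0 := hsq.ne_zero
    have hpp : m.minFac.Prime := Nat.minFac_prime hm1
    have hpd : m.minFac ∣ m := Nat.minFac_dvd m
    have hp2 : m.minFac ≠ 2 := by
      intro h
      rw [← Nat.not_even_iff_odd] at hodd
      exact hodd ((even_iff_two_dvd).mpr (h ▸ hpd))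
    obtain ⟨k, hk⟩ := hpd
    set p := m.minFac with hpdef
    have hppos : 1 < p := hpp.one_lt
    have hk0 : k ≠ 0 := by rintro rfl; exact hm0 (by simpa using hk)
    have hklt : k < m := by
      rw [hk]
      exact Nat.lt_mul_iff_one_lt_left (Nat.pos_of_ne_zero hk0) |>.mpr hppos
    have hcop : Nat.Coprime p k := by
      rw [Nat.Prime.coprime_iff_not_dvd hpp]
      intro hdk
      have hsq' : p * p ∣ m := by
        rw [hk]
        exact mul_dvd_mul_left p hdk
      exact hpp.ne_one (Nat.isUnit_iff.mp (hsq p hsq'))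
    have hsqk : Squarefree k := hsq.squarefree_of_dvd ⟨p, by rw [hk]; ring⟩
    have hoddk : Odd k := by
      rcases Nat.even_or_odd k with hek | hok
      · exfalso
        rw [← Nat.not_even_iff_odd] at hodd
        exact hodd (hk ▸ hek.mul_left p)
      · exact hok
    have hIH := ih k hklt hsqk hoddk
    have hphi : m.totient = (p - 1) * k.totient := by
      rw [hk, Nat.totient_mul hcop, Nat.totient_prime hpp]
    calc m ^ 6 = p ^ 6 * k ^ 6 := by rw [hk]; ring
      _ ≤ (p - 1) ^ 10 * k.totient ^ 10 :=
          Nat.mul_le_mul (odd_prime_pow_bound hpp hp2) hIH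
      _ = m.totient ^ 10 := by rw [hphi]; ring

lemma squarefree_totient_bound {q : ℕ} (hsq : Squarefree q) :
    q ^ 6 ≤ 1024 * q.totient ^ 10 := by
  rcases Nat.even_or_odd q with he | ho
  · obtain ⟨k, hk⟩ : 2 ∣ q := (even_iff_two_dvd).mp he
    have hq0 : q ≠ 0 := hsq.ne_zero
    have hk0 : k ≠ 0 := by rintro rfl; exact hq0 (by simpa using hk)
    have hcop : Nat.Coprime 2 k := by
      rw [Nat.Prime.coprime_iff_not_dvd Nat.prime_two]
      intro h2k
      have : 2 * 2 ∣ q := by rw [hk]; exact mul_dvd_mul_left 2 h2k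
      exact Nat.prime_two.ne_one (Nat.isUnit_iff.mp (hsq 2 this))
    have hoddk : Odd k := by
      rcases Nat.even_or_odd k with hek | hok
      · exact absurd ((even_iff_two_dvd).mp hek) (by
          intro h2k
          have : 2 * 2 ∣ q := by rw [hk]; exact mul_dvd_mul_left 2 h2k
          exact Nat.prime_two.ne_one (Nat.isUnit_iff.mp (hsq 2 this)))
      · exact hok
    have hsqk : Squarefree k := hsq.squarefree_of_dvd ⟨2, by rw [hk]; ring⟩
    have h1 := odd_squarefree_bound k hsqk hoddk
    have hphi : q.totient = k.totient := by
      rw [hk, Nat.totient_mul hcop, Nat.totient_two, one_mul]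
    calc q ^ 6 = 64 * k ^ 6 := by rw [hk]; ring
      _ ≤ 64 * k.totient ^ 10 := Nat.mul_le_mul_left _ h1
      _ ≤ 1024 * q.totient ^ 10 := by
          rw [hphi]
          exact Nat.mul_le_mul_right _ (by norm_num)
  · calc q ^ 6 ≤ q.totient ^ 10 := odd_squarefree_bound q hsq ho
      _ ≤ 1024 * q.totient ^ 10 := Nat.le_mul_of_pos_left _ (by norm_num)

/-- The real version used for summability. -/
lemma totient_rpow_bound {q : ℕ} (hsq : Squarefree q) :
    (q : ℝ) ^ (6/5 : ℝ) ≤ 4 * (q.totient : ℝ) ^ 2 := by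
  have h := squarefree_totient_bound hsq
  have h' : ((q : ℝ)) ^ (6 : ℕ) ≤ 1024 * ((q.totient : ℝ)) ^ (10 : ℕ) := by
    exact_mod_cast h
  have hq0 : (0:ℝ) ≤ (q:ℝ) := Nat.cast_nonneg q
  refine le_of_pow_le_pow_left₀ (n := 5) (by norm_num) (by positivity) ?_
  have e1 : ((q : ℝ) ^ (6/5 : ℝ)) ^ (5 : ℕ) = (q : ℝ) ^ (6 : ℕ) := by
    rw [← Real.rpow_natCast ((q:ℝ) ^ (6/5 : ℝ)) 5, ← Real.rpow_mul hq0]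
    norm_num
  have e2 : (4 * (q.totient : ℝ) ^ 2) ^ (5 : ℕ) = 1024 * (q.totient : ℝ) ^ (10 : ℕ) := by
    ring
  rw [e1, e2]
  exact h'

lemma F_mult (N : ℕ) : ((μ : ArithmeticFunction ℂ) * fN N).IsMultiplicative :=
  (isMultiplicative_moebius.intCast).mul (fN_mult N)

noncomputable def g (N : ℕ) : ℕ → ℂ :=
  fun q => ((μ q : ℤ) : ℂ) * ((μ : ArithmeticFunction ℂ) * fN N) q / ((q.totient : ℂ)) ^ 2

lemma g_zero (N : ℕ) : g N 0 = 0 := by simp [g]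

lemma g_one (N : ℕ) : g N 1 = 1 := by
  simp [g, (F_mult N).map_one]

lemma goldbachG_eq (N q : ℕ) (hq : q ≠ 0) : goldbachG N q = g N q := by
  rcases eq_or_ne q 1 with rfl | hq1
  · rw [goldbachG, if_pos rfl, g_one]
  · rw [goldbachG, if_neg hq1, g]
    have hset : (Finset.Ioo 0 q).filter (fun a => Nat.gcd a q = 1)
        = (Finset.range q).filter (fun a => Nat.gcd a q = 1) := by
      ext a
      simp only [Finset.mem_filter, Finset.mem_Ioo, Finset.mem_range]
      constructor
      · rintro ⟨⟨_, h2⟩, h3⟩; exact ⟨h2, h3⟩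
      · rintro ⟨h2, h3⟩
        refine ⟨⟨?_, h2⟩, h3⟩
        rcases Nat.eq_zero_or_pos a with rfl | h
        · exact absurd (show q = 1 by simpa using h3) hq1
        · exact h
    rw [hset, ramanujan N q (Nat.pos_of_ne_zero hq)]
    ring

lemma g_mul (N : ℕ) {m n : ℕ} (h : Nat.Coprime m n) : g N (m * n) = g N m * g N n := by
  rcases eq_or_ne m 0 with rfl | hm0
  · have hn1 : n = 1 := by simpa using h
    subst hn1
    simp [g_zero, g_one]
  rcases eq_or_ne n 0 with rfl | hn0
  · have hm1 : m = 1 := by simpa using h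
    subst hm1
    simp [g_zero, g_one]
  · unfold g
    have hFm := (F_mult N).map_mul_of_coprime h
    have hmu : μ (m * n) = μ m * μ n := isMultiplicative_moebius.map_mul_of_coprime h
    have hphi : (((m * n).totient : ℕ) : ℂ) = ((m.totient : ℕ) : ℂ) * ((n.totient : ℕ) : ℂ) := by
      rw [Nat.totient_mul h]; push_cast; ring
    rw [hFm, hmu, hphi]
    push_cast
    ring

lemma norm_F_le (N : ℕ) (hN : N ≠ 0) (q : ℕ) :
    ‖((μ : ArithmeticFunction ℂ) * fN N) q‖ ≤ ∑ d ∈ N.divisors, (d : ℝ) := by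
  rw [mul_apply, Nat.sum_divisorsAntidiagonal (fun d e => (μ : ArithmeticFunction ℂ) d * fN N e)]
  refine (norm_sum_le _ _).trans ?_
  have step1 : ∀ d ∈ q.divisors,
      ‖(μ : ArithmeticFunction ℂ) d * fN N (q / d)‖ ≤ ‖fN N (q / d)‖ := by
    intro d _
    rw [norm_mul]
    have h1 : ‖(μ : ArithmeticFunction ℂ) d‖ ≤ 1 := by
      rw [intCoe_apply, Complex.norm_intCast]
      exact_mod_cast abs_moebius_le_one
    calc ‖(μ : ArithmeticFunction ℂ) d‖ * ‖fN N (q / d)‖ ≤ 1 * ‖fN N (q / d)‖ :=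
          mul_le_mul_of_nonneg_right h1 (norm_nonneg _)
      _ = ‖fN N (q / d)‖ := one_mul _
  refine (Finset.sum_le_sum step1).trans ?_
  rw [Nat.sum_div_divisors q (fun d => ‖fN N d‖)]
  have hnorm : ∀ d : ℕ, ‖fN N d‖ = if d ∣ N ∧ d ≠ 0 then (d : ℝ) else 0 := by
    intro d
    rw [fN_apply]
    split
    · rw [Complex.norm_natCast]
    · rw [norm_zero]
  calc ∑ d ∈ q.divisors, ‖fN N d‖
      = ∑ d ∈ q.divisors.filter (fun d => d ∣ N ∧ d ≠ 0), (d : ℝ) := by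
        rw [Finset.sum_filter]
        exact Finset.sum_congr rfl fun d _ => hnorm d
    _ ≤ ∑ d ∈ N.divisors, (d : ℝ) := by
        refine Finset.sum_le_sum_of_subset_of_nonneg ?_ (fun i _ _ => Nat.cast_nonneg i)
        intro d hd
        obtain ⟨-, hd1, -⟩ := Finset.mem_filter.mp hd
        exact Nat.mem_divisors.mpr ⟨hd1, hN⟩

lemma norm_g_le (N : ℕ) (hN : N ≠ 0) (q : ℕ) (hq : q ≠ 0) :
    ‖g N q‖ ≤ (4 * ∑ d ∈ N.divisors, (d : ℝ)) * (((q : ℝ)) ^ (6/5 : ℝ))⁻¹ := by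
  set C : ℝ := ∑ d ∈ N.divisors, (d : ℝ) with hC
  have hC0 : 0 ≤ C := Finset.sum_nonneg fun i _ => Nat.cast_nonneg i
  have hqpos : 0 < (q : ℝ) := by exact_mod_cast Nat.pos_of_ne_zero hq
  have hx : (0 : ℝ) < (q : ℝ) ^ (6/5 : ℝ) := Real.rpow_pos_of_pos hqpos _
  by_cases hsq : Squarefree q
  · have hphi : (0 : ℝ) < (q.totient : ℝ) := by
      exact_mod_cast Nat.totient_pos.mpr (Nat.pos_of_ne_zero hq)
    have h1 : ‖g N q‖ ≤ C / (q.totient : ℝ) ^ 2 := by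
      rw [g, norm_div, norm_mul]
      have hd : ‖((q.totient : ℕ) : ℂ) ^ 2‖ = (q.totient : ℝ) ^ 2 := by
        rw [norm_pow, Complex.norm_natCast]
      rw [hd]
      have hnum : ‖((μ q : ℤ) : ℂ)‖ * ‖((μ : ArithmeticFunction ℂ) * fN N) q‖ ≤ C := by
        have h1' : ‖((μ q : ℤ) : ℂ)‖ ≤ 1 := by
          rw [Complex.norm_intCast]
          exact_mod_cast abs_moebius_le_one
        calc ‖((μ q : ℤ) : ℂ)‖ * ‖((μ : ArithmeticFunction ℂ) * fN N) q‖
            ≤ 1 * ‖((μ : ArithmeticFunction ℂ) * fN N) q‖ :=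
              mul_le_mul_of_nonneg_right h1' (norm_nonneg _)
          _ = ‖((μ : ArithmeticFunction ℂ) * fN N) q‖ := one_mul _
          _ ≤ C := norm_F_le N hN q
      exact div_le_div_of_nonneg_right hnum (by positivity) |>.trans_eq rfl
    have hb : 1 / (q.totient : ℝ) ^ 2 ≤ 4 / ((q : ℝ) ^ (6/5 : ℝ)) := by
      rw [div_le_div_iff₀ (by positivity) hx]
      have := totient_rpow_bound hsq
      linarith
    calc ‖g N q‖ ≤ C / (q.totient : ℝ) ^ 2 := h1
      _ = C * (1 / (q.totient : ℝ) ^ 2) := by ring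
      _ ≤ C * (4 / ((q : ℝ) ^ (6/5 : ℝ))) := mul_le_mul_of_nonneg_left hb hC0
      _ = (4 * C) * (((q : ℝ)) ^ (6/5 : ℝ))⁻¹ := by ring
  · have hmu : μ q = 0 := moebius_eq_zero_of_not_squarefree hsq
    have : g N q = 0 := by simp [g, hmu]
    rw [this, norm_zero]
    positivity

lemma summable_norm_g (N : ℕ) (hN : N ≠ 0) : Summable (fun q : ℕ => ‖g N (q + 1)‖) := by
  have hs : Summable (fun n : ℕ => (((n : ℝ)) ^ (6/5 : ℝ))⁻¹) :=
    Real.summable_nat_rpow_inv.mpr (by norm_num)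
  have hs2 : Summable (fun q : ℕ =>
      (4 * ∑ d ∈ N.divisors, (d : ℝ)) * ((((q + 1 : ℕ) : ℝ)) ^ (6/5 : ℝ))⁻¹) :=
    ((summable_nat_add_iff 1).mpr hs).mul_left _
  exact Summable.of_nonneg_of_le (fun q => norm_nonneg _)
    (fun q => norm_g_le N hN (q + 1) (Nat.succ_ne_zero q)) hs2

lemma local_factor (N : ℕ) (p : Nat.Primes) :
    ∑' e : ℕ, g N ((p : ℕ) ^ e) = 1 + goldbachG N (p : ℕ) := by
  have hp : (p : ℕ).Prime := p.prop
  have hvanish : ∀ e ∉ ({0, 1} : Finset ℕ), g N ((p : ℕ) ^ e) = 0 := by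
    intro e he
    simp only [Finset.mem_insert, Finset.mem_singleton] at he
    push_neg at he
    have hmu : μ ((p : ℕ) ^ e) = 0 := by
      rw [moebius_apply_prime_pow hp he.1, if_neg he.2]
    simp [g, hmu]
  rw [tsum_eq_sum hvanish, Finset.sum_pair (by norm_num : (0 : ℕ) ≠ 1), pow_zero, pow_one,
    g_one, goldbachG_eq N p hp.pos.ne']


end GoldbachAux

open GoldbachAux in
/-- The series `Σ_{q=1}^∞ G(q)` converges absolutely, the product
`∏_{p prime} (1 + G(p))` converges, and the two are equal. -/
theorem goldbachG_sum_eq_euler_product (N : ℕ) (hN : 0 < N) :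
    Summable (fun q : ℕ => ‖goldbachG N (q + 1)‖) ∧
    Multipliable (fun p : Nat.Primes => 1 + goldbachG N p) ∧
    (∑' q : ℕ, goldbachG N (q + 1)) = ∏' p : Nat.Primes, (1 + goldbachG N p) := by
  have hN0 : N ≠ 0 := hN.ne'
  have hsg := summable_norm_g N hN0
  have hsum1 : Summable (fun q : ℕ => ‖goldbachG N (q + 1)‖) := by
    refine hsg.congr fun q => ?_
    rw [goldbachG_eq N (q + 1) (Nat.succ_ne_zero q)]
  have hsumg : Summable (fun q : ℕ => ‖g N q‖) := (summable_nat_add_iff 1).mp hsg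
  have hEP := EulerProduct.eulerProduct_hasProd (f := g N) (g_one N)
    (fun {m n} h => g_mul N h) hsumg (g_zero N)
  rw [show (fun p : Nat.Primes => ∑' e : ℕ, g N ((p : ℕ) ^ e))
      = fun p : Nat.Primes => 1 + goldbachG N (p : ℕ) from funext fun p => local_factor N p] at hEP
  refine ⟨hsum1, hEP.multipliable, ?_⟩
  have h1 : (∑' n : ℕ, g N n) = g N 0 + ∑' n : ℕ, g N (n + 1) := Summable.tsum_eq_zero_add hsumg.of_norm
  have h2 : (∑' q : ℕ, goldbachG N (q + 1)) = ∑' n : ℕ, g N n := by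
    rw [h1, g_zero, zero_add]
    exact tsum_congr fun q => goldbachG_eq N (q + 1) (Nat.succ_ne_zero q)
  rw [h2, hEP.tprod_eq]
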